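/- Equip ℂ² with the hermitian form ⟨u,v⟩ = q·u₁·conj(v₂) + conj(q)·u₂·conj(v₁), where q is a nonzero complex number, let δ be a purely imaginary complex number with Im δ > 0, set ε = −δ·conj(q), and for τ ∈ ℂ set z(τ) = (−τ·δ·conj(q), 1). Let λ = (λ₁,λ₂) ∈ ℂ² and let m be a real number with ⟨λ,λ⟩ = m < 0. Then: (i) λ₂ ≠ 0; (ii) for τ ∈ ℂ, ⟨z(τ), λ⟩ = 0 if and only if τ = conj(λ₁/(λ₂·ε)); and (iii) Im(conj(λ₁/(λ₂·ε))) = −m/(2·|δ|·|q·λ₂|²), which is positive, so the Heegner point τ_λ = conj(λ₁/(λ₂·ε)) lies in the upper half-plane. -/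

import Mathlib

open Complex

/-- The hermitian form `⟨u,v⟩ = q·u₁·conj(v₂) + conj(q)·u₂·conj(v₁)` on `ℂ²`. -/
def hermForm (q : ℂ) (u v : ℂ × ℂ) : ℂ :=
  q * u.1 * (starRingEnd ℂ) v.2 + (starRingEnd ℂ) q * u.2 * (starRingEnd ℂ) v.1

/-- The normalized representative `z(τ) = (−τ·δ·conj(q), 1)`. -/
def zRep (q δ τ : ℂ) : ℂ × ℂ := (-τ * δ * (starRingEnd ℂ) q, 1)

/-- For a vector `λ = (λ₁,λ₂)` of negative norm `m`: (i) `λ₂ ≠ 0`; (ii) `⟨z(τ),λ⟩ = 0` iff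
`τ = conj(λ₁/(λ₂·ε))` where `ε = −δ·conj(q)`; (iii) the Heegner point
`τ_λ = conj(λ₁/(λ₂·ε))` has imaginary part `−m/(2·|δ|·|q·λ₂|²) > 0`, so it lies in the
upper half-plane. -/
theorem heegner_point (q δ ε : ℂ) (hq : q ≠ 0) (hδre : δ.re = 0) (hδim : 0 < δ.im)
    (hε : ε = -δ * (starRingEnd ℂ) q) (lam₁ lam₂ : ℂ) (m : ℝ)
    (hnorm : hermForm q (lam₁, lam₂) (lam₁, lam₂) = (m : ℂ)) (hm : m < 0) :
    lam₂ ≠ 0 ∧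
    (∀ τ : ℂ, hermForm q (zRep q δ τ) (lam₁, lam₂) = 0 ↔
      τ = (starRingEnd ℂ) (lam₁ / (lam₂ * ε))) ∧
    ((starRingEnd ℂ) (lam₁ / (lam₂ * ε))).im
        = -m / (2 * ‖δ‖ * ‖q * lam₂‖ ^ 2) ∧
    0 < ((starRingEnd ℂ) (lam₁ / (lam₂ * ε))).im := by
  have hδ0 : δ ≠ 0 := by
    intro h; rw [h] at hδim; simp at hδim
  have hconjδ : (starRingEnd ℂ) δ = -δ := by
    apply Complex.ext <;> simp [hδre]
  -- (i)
  have hl2 : lam₂ ≠ 0 := by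
    intro h
    rw [h] at hnorm
    simp [hermForm] at hnorm
    exact hm.ne (by exact_mod_cast hnorm.symm)
  have hconjl2 : (starRingEnd ℂ) lam₂ ≠ 0 := by
    simpa using hl2
  have hconjq : (starRingEnd ℂ) q ≠ 0 := by simpa using hq
  set A : ℂ := δ * q * (starRingEnd ℂ) lam₂ with hA
  have hA0 : A ≠ 0 := mul_ne_zero (mul_ne_zero hδ0 hq) hconjl2
  -- the Heegner point equals conj λ₁ / A
  have hpt : (starRingEnd ℂ) (lam₁ / (lam₂ * ε)) = (starRingEnd ℂ) lam₁ / A := by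
    rw [hε, map_div₀, map_mul, map_mul, map_neg, hconjδ, Complex.conj_conj]
    ring_nf
    rw [hA]; ring
  -- real part relation from hnorm
  have hre : (q * lam₁ * (starRingEnd ℂ) lam₂).re = m / 2 := by
    have h := congrArg Complex.re hnorm
    simp [hermForm, Complex.add_re, Complex.mul_re, Complex.conj_re, Complex.conj_im] at h
    simp [Complex.mul_re, Complex.conj_re, Complex.conj_im]
    linarith
  refine ⟨hl2, ?_, ?_, ?_⟩
  · intro τ
    have hform : hermForm q (zRep q δ τ) (lam₁, lam₂)
        = (starRingEnd ℂ) q * ((starRingEnd ℂ) lam₁ - τ * A) := by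
      simp only [hermForm, zRep, hA]; ring
    rw [hform, hpt, mul_eq_zero, sub_eq_zero]
    constructor
    · rintro (h | h)
      · exact absurd h hconjq
      · rw [eq_div_iff hA0]; exact h.symm
    · intro h
      right
      rw [eq_div_iff hA0] at h
      exact h.symm
  · rw [hpt]
    have habsδ : ‖δ‖ = δ.im := by
      rw [Complex.norm_def, Complex.normSq_apply, hδre]
      simpa using Real.sqrt_mul_self hδim.le
    have hnsq : ‖q * lam₂‖ ^ 2 = Complex.normSq (q * lam₂) := Complex.sq_norm _
    rw [habsδ, hnsq]
    rw [Complex.div_im]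
    have hnsqA : Complex.normSq A = δ.im ^ 2 * Complex.normSq (q * lam₂) := by
      simp [hA, Complex.normSq_mul, Complex.normSq_apply, hδre]
      ring
    have hnum : ((starRingEnd ℂ) lam₁).im * A.re - ((starRingEnd ℂ) lam₁).re * A.im
        = -(δ.im * (q * lam₁ * (starRingEnd ℂ) lam₂).re) := by
      simp [hA, Complex.mul_re, Complex.mul_im, Complex.conj_re, Complex.conj_im, hδre]
      ring
    have hq2 : (0:ℝ) < Complex.normSq (q * lam₂) :=
      Complex.normSq_pos.mpr (mul_ne_zero hq hl2)
    rw [div_sub_div_same, hnum, hre, hnsqA]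
    rw [div_eq_div_iff (by positivity) (by positivity)]
    ring
  · rw [hpt]
    have habsδ : ‖δ‖ = δ.im := by
      rw [Complex.norm_def, Complex.normSq_apply, hδre]
      simpa using Real.sqrt_mul_self hδim.le
    rw [Complex.div_im]
    have hnsqA : Complex.normSq A = δ.im ^ 2 * Complex.normSq (q * lam₂) := by
      simp [hA, Complex.normSq_mul, Complex.normSq_apply, hδre]
      ring
    have hnum : ((starRingEnd ℂ) lam₁).im * A.re - ((starRingEnd ℂ) lam₁).re * A.im
        = -(δ.im * (q * lam₁ * (starRingEnd ℂ) lam₂).re) := by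
      simp [hA, Complex.mul_re, Complex.mul_im, Complex.conj_re, Complex.conj_im, hδre]
      ring
    have hq2 : (0:ℝ) < Complex.normSq (q * lam₂) :=
      Complex.normSq_pos.mpr (mul_ne_zero hq hl2)
    rw [div_sub_div_same, hnum, hre, hnsqA]
    have : -(δ.im * (m / 2)) = -m / 2 * δ.im := by ring
    rw [this]
    exact div_pos (mul_pos (by linarith) hδim) (by positivity)
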